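/- Let d, p ≥ 1 be integers with p prime, and let f^1, ..., f^r ∈ ℤ^d with r ≥ pd − d + 1. Then there exists a non-empty subset I ⊆ {1, ..., r} such that ∑_{i ∈ I} f^i ∈ pℤ^d, i.e., every coordinate of the sum is divisible by p. -/

import Mathlib

open MvPolynomial Finset

theorem olson_corollary (d p r : ℕ) (hd : 1 ≤ d) (hp : p.Prime)
    (hr : p * d - d + 1 ≤ r) (f : Fin r → Fin d → ℤ) :
    ∃ I : Finset (Fin r), I.Nonempty ∧ ∀ j : Fin d, (p : ℤ) ∣ ∑ i ∈ I, f i j := by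
  haveI : Fact p.Prime := ⟨hp⟩
  set K := ZMod p
  have hpne : p - 1 ≠ 0 := by have := hp.two_le; omega
  set g : Fin d → MvPolynomial (Fin r) K :=
    fun j => ∑ i : Fin r, C ((f i j : ZMod p)) * X i ^ (p - 1) with hg
  have hdeg : ∀ j, (g j).totalDegree ≤ p - 1 := by
    intro j
    refine (totalDegree_finset_sum _ _).trans ?_
    refine Finset.sup_le fun i _ => ?_
    calc (C ((f i j : ZMod p)) * X i ^ (p - 1)).totalDegree
        ≤ (C ((f i j : ZMod p))).totalDegree + (X i ^ (p-1) : MvPolynomial (Fin r) K).totalDegree :=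
          totalDegree_mul _ _
      _ ≤ 0 + (p - 1) := by
          gcongr
          · exact le_of_eq (totalDegree_C _)
          · exact (totalDegree_pow _ _).trans (by simp)
      _ = p - 1 := by omega
  have hEq : d * (p - 1) = p * d - d := by
    cases p with
    | zero => simp
    | succ q => rw [Nat.succ_sub_one, Nat.succ_mul, Nat.add_sub_cancel, mul_comm]
  have hsum : (∑ j : Fin d, (g j).totalDegree) < Fintype.card (Fin r) := by
    calc (∑ j : Fin d, (g j).totalDegree) ≤ ∑ _j : Fin d, (p - 1) :=
          Finset.sum_le_sum fun j _ => hdeg j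
      _ = d * (p - 1) := by simp [mul_comm]
      _ = p * d - d := hEq
      _ < r := by omega
      _ = Fintype.card (Fin r) := (Fintype.card_fin r).symm
  have hdvd := char_dvd_card_solutions_of_fintype_sum_lt p hsum
  have h0 : ∀ i ∈ Finset.univ, eval (0 : Fin r → K) (g i) = 0 := by
    intro i _
    simp [hg, eval_sum, zero_pow hpne]
  have hcard : 1 < Fintype.card { x : Fin r → K // ∀ i ∈ Finset.univ, eval x (g i) = 0 } := by
    have hpos : 0 < Fintype.card { x : Fin r → K // ∀ i ∈ Finset.univ, eval x (g i) = 0 } :=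
      Fintype.card_pos_iff.mpr ⟨⟨0, h0⟩⟩
    have hdvd' : p ∣ Fintype.card { x : Fin r → K // ∀ i ∈ Finset.univ, eval x (g i) = 0 } := by
      have hc : Fintype.card { x : Fin r → K // ∀ i ∈ Finset.univ, eval x (g i) = 0 }
          = Fintype.card { x : Fin r → K // ∀ i : Fin d, eval x (g i) = 0 } :=
        Fintype.card_congr (Equiv.subtypeEquivRight (by simp))
      rw [hc]
      convert hdvd using 2
    have hle := Nat.le_of_dvd hpos hdvd'
    have := hp.two_le
    omega
  obtain ⟨x, hx⟩ := Fintype.exists_ne_of_one_lt_card hcard ⟨0, h0⟩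
  have hxne : (x : Fin r → K) ≠ 0 := fun h => hx (Subtype.ext h)
  set I : Finset (Fin r) := Finset.univ.filter (fun i => (x : Fin r → K) i ≠ 0) with hI
  refine ⟨I, ?_, ?_⟩
  · rcases Function.ne_iff.mp hxne with ⟨i, hi⟩
    exact ⟨i, Finset.mem_filter.mpr ⟨Finset.mem_univ i, by simpa using hi⟩⟩
  · intro j
    have hev := x.2 j (Finset.mem_univ j)
    have h1 : eval (x : Fin r → K) (g j) = ∑ i ∈ I, ((f i j : ℤ) : K) := by
      simp only [hg, eval_sum, map_mul, eval_C, map_pow, eval_X]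
      rw [← Finset.sum_filter_of_ne (p := fun i => (x : Fin r → K) i ≠ 0)]
      · refine Finset.sum_congr rfl fun i hi => ?_
        rw [Finset.mem_filter] at hi
        rw [ZMod.pow_card_sub_one_eq_one hi.2, mul_one]
      · intro i _ hne
        rcases eq_or_ne ((x : Fin r → K) i) 0 with hx0 | hx0
        · exfalso
          rw [hx0, zero_pow hpne, mul_zero] at hne
          exact hne rfl
        · exact hx0
    have key : ((∑ i ∈ I, f i j : ℤ) : K) = 0 := by
      push_cast
      rw [← hev, h1]; exact (Int.cast_sum (R := K) I (fun i => f i j))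
    exact (ZMod.intCast_zmod_eq_zero_iff_dvd _ _).mp key
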